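/- The generating function identity Σ_{n≥0} A_n(s,t) u^n = Σ_{k≥0} (1/k!) (log(1/(1−(1−s)(1−t)u)))^k · A_k(s)A_k(t)/((1−s)^k(1−t)^k) holds as formal power series, where A_n(s,t) is the two-sided Eulerian polynomial and A_k the ordinary Eulerian polynomial. -/

import Mathlib

open Finset

section Defs
variable {α : Type*} [LinearOrder α]

/-- Number of descents of a list. -/
def descentsCount : List α → ℕ
  | a :: b :: l => (if b < a then 1 else 0) + descentsCount (b :: l)
  | _ => 0

/-- Number of (interior) peaks of a list. -/
def peaksCount : List α → ℕ
  | a :: b :: c :: l => (if a < b ∧ c < b then 1 else 0) + peaksCount (b :: c :: l)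
  | _ => 0

/-- 1 if the list starts with a descent, else 0. -/
def initDesc : List α → ℕ
  | a :: b :: _ => if b < a then 1 else 0
  | _ => 0

/-- Number of left peaks of a list. -/
def leftPeaksCount (l : List α) : ℕ := initDesc l + peaksCount l

/-- Number of interior direction changes. -/
def turnsCount : List α → ℕ
  | a :: b :: c :: l => (if (a < b ∧ c < b) ∨ (b < a ∧ b < c) then 1 else 0) + turnsCount (b :: c :: l)
  | _ => 0

/-- Number of biruns (maximal monotone consecutive subsequences). -/
def birunsCount (l : List α) : ℕ := if l = [] then 0 else turnsCount l + 1

/-- Number of up-down runs. -/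
def udrCount (l : List α) : ℕ := initDesc l + birunsCount l

/-- `IsAltFrom true l` : the list `l` alternates starting with a descent. -/
def IsAltFrom : Bool → List α → Prop
  | _, [] => True
  | _, [_] => True
  | true, a :: b :: l => b < a ∧ IsAltFrom false (b :: l)
  | false, a :: b :: l => a < b ∧ IsAltFrom true (b :: l)

end Defs

def desP {n : ℕ} (π : Equiv.Perm (Fin n)) : ℕ := descentsCount (List.ofFn ⇑π)
def pkP {n : ℕ} (π : Equiv.Perm (Fin n)) : ℕ := peaksCount (List.ofFn ⇑π)
def lpkP {n : ℕ} (π : Equiv.Perm (Fin n)) : ℕ := leftPeaksCount (List.ofFn ⇑π)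
def brP {n : ℕ} (π : Equiv.Perm (Fin n)) : ℕ := birunsCount (List.ofFn ⇑π)
def udrP {n : ℕ} (π : Equiv.Perm (Fin n)) : ℕ := udrCount (List.ofFn ⇑π)
def AltP {n : ℕ} (π : Equiv.Perm (Fin n)) : Prop := IsAltFrom true (List.ofFn ⇑π)

def fixedCount {n : ℕ} (π : Equiv.Perm (Fin n)) : ℕ :=
  (Finset.univ.filter fun x => π x = x).card
def cycleCount {n : ℕ} (π : Equiv.Perm (Fin n)) : ℕ := π.cycleType.card + fixedCount π
def oddCycleCount {n : ℕ} (π : Equiv.Perm (Fin n)) : ℕ :=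
  (π.cycleType.filter fun l => l % 2 = 1).card + fixedCount π

noncomputable def stirC (n k : ℕ) : ℕ := Nat.card {π : Equiv.Perm (Fin n) // cycleCount π = k}
noncomputable def dOdd (n k : ℕ) : ℕ :=
  Nat.card {π : Equiv.Perm (Fin n) // cycleCount π = k ∧ ∀ l ∈ π.cycleType, l % 2 = 1}
noncomputable def eOdd (n k : ℕ) : ℕ := Nat.card {π : Equiv.Perm (Fin n) // oddCycleCount π = k}
noncomputable def fOdd (n k m : ℕ) : ℕ :=
  Nat.card {π : Equiv.Perm (Fin n) // oddCycleCount π = k ∧ cycleCount π = m}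

noncomputable def eulerE (k : ℕ) : ℕ := Nat.card {π : Equiv.Perm (Fin k) // AltP π}


/-- The ordinary Eulerian polynomial in the variable `X v`, with `A_0 = 1`. -/
noncomputable def eulerPoly (v : Fin 2) (k : ℕ) : MvPolynomial (Fin 2) ℚ :=
  if k = 0 then 1 else ∑ π : Equiv.Perm (Fin k), MvPolynomial.X v ^ (desP π + 1)

/-- The two-sided Eulerian polynomial `A_n(s,t)` with `s = X 0`, `t = X 1`. -/
noncomputable def eulerTwo (n : ℕ) : MvPolynomial (Fin 2) ℚ :=
  if n = 0 then 1 else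
    ∑ π : Equiv.Perm (Fin n),
      MvPolynomial.X 0 ^ (desP π + 1) * MvPolynomial.X (1 : Fin 2) ^ (desP π⁻¹ + 1)

/-- `log(1/(1-u)) = Σ_{m ≥ 1} u^m/m`. -/
noncomputable def logInvSer : PowerSeries ℚ :=
  PowerSeries.mk fun m => if m = 0 then 0 else (1 : ℚ) / m


namespace Aux


open Finset

variable {α : Type*} [LinearOrder α]

/-- descent set of a tuple -/
def desF {N : ℕ} (f : Fin (N+1) → α) : Finset (Fin N) :=
  univ.filter fun i => f i.succ < f i.castSucc

lemma descentsCount_ofFn : ∀ {N : ℕ} (f : Fin (N+1) → α),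
    descentsCount (List.ofFn f) = (desF f).card := by
  intro N
  induction N with
  | zero =>
    intro f
    simp [desF, List.ofFn_succ, descentsCount]
  | succ M ih =>
    intro f
    have h2 : List.ofFn (fun i : Fin (M+1) => f i.succ) =
        f 1 :: List.ofFn (fun i : Fin M => f i.succ.succ) := by
      rw [List.ofFn_succ]
      simp [Fin.succ_zero_eq_one]
    have h1 : List.ofFn f = f 0 :: f 1 :: List.ofFn (fun i : Fin M => f i.succ.succ) := by
      rw [List.ofFn_succ, h2]
    rw [h1, descentsCount, ← h2, ih (fun i => f i.succ)]
    have hcard : (desF f).card = (if f 1 < f 0 then 1 else 0)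
        + (desF (fun i : Fin (M+1) => f i.succ)).card := by
      rw [desF, desF, card_filter, card_filter, Fin.sum_univ_succ]
      simp [Fin.succ_zero_eq_one, Fin.succ_castSucc, -Fin.castSucc_succ]
      rfl
    omega

lemma desP_eq {N : ℕ} (π : Equiv.Perm (Fin (N+1))) : desP π = (desF ⇑π).card :=
  descentsCount_ofFn _

lemma desF_card_le {N : ℕ} (f : Fin (N+1) → α) : (desF f).card ≤ N := by
  calc (desF f).card ≤ (univ : Finset (Fin N)).card := card_filter_le _ _
  _ = N := by simp



/-- strictly monotone maps count -/
lemma card_strictMono_fin (n M : ℕ) :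
    Fintype.card {g : Fin n → Fin M // StrictMono g} = M.choose n := by
  have e : {g : Fin n → Fin M // StrictMono g} ≃ {s : Finset (Fin M) // s.card = n} := by
    refine
      { toFun := fun g => ⟨Finset.univ.image g.1, by
          rw [Finset.card_image_of_injective _ g.2.injective, Finset.card_univ, Fintype.card_fin]⟩
        invFun := fun s => ⟨s.1.orderEmbOfFin s.2, (s.1.orderEmbOfFin s.2).strictMono⟩
        left_inv := ?_
        right_inv := ?_ }
    · rintro ⟨g, hg⟩
      apply Subtype.ext
      have := Finset.orderEmbOfFin_unique'
        (s := Finset.univ.image g) (k := n)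
        (by rw [Finset.card_image_of_injective _ hg.injective, Finset.card_univ, Fintype.card_fin])
        (f := OrderEmbedding.ofStrictMono g hg)
        (fun i => Finset.mem_image_of_mem g (Finset.mem_univ i))
      exact funext fun i => (congrFun (congrArg (fun (f : Fin n ↪o Fin M) => (f : Fin n → Fin M)) this) i).symm
    · rintro ⟨s, hs⟩
      apply Subtype.ext
      apply Finset.coe_injective
      rw [Finset.coe_image, Finset.coe_univ, Set.image_univ, Finset.range_orderEmbOfFin]
  rw [Fintype.card_congr e, Fintype.card_subtype]
  have : Finset.univ.filter (fun s : Finset (Fin M) => s.card = n)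
      = Finset.powersetCard n Finset.univ := by
    ext s
    simp [Finset.mem_powersetCard_univ]
  rw [this, Finset.card_powersetCard, Finset.card_univ, Fintype.card_fin]

variable {N : ℕ}

/-- gap lemma for strictly increasing adjacent steps -/
lemma gap_lemma {g : Fin (N+1) → ℕ} (hg : ∀ i : Fin N, g i.castSucc < g i.succ) :
    ∀ p q : Fin (N+1), p ≤ q → g p + (q.val - p.val) ≤ g q := by
  intro p q
  induction q using Fin.induction with
  | zero =>
    intro hp
    have : p = 0 := le_antisymm hp (Fin.zero_le p)
    subst this; simp
  | succ i ih =>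
    intro hp
    rcases eq_or_lt_of_le hp with h | h
    · subst h; simp
    · have hpc : p ≤ i.castSucc := by
        have h1 : p.val < i.val + 1 := by simpa [Fin.lt_def] using h
        simp only [Fin.le_def, Fin.coe_castSucc]; omega
      have h2 := ih hpc
      have h3 := hg i
      simp only [Fin.le_def, Fin.coe_castSucc] at *
      simp only [Fin.val_succ]
      omega

/-- window lemma -/
lemma window_lt {β : Type*} [Preorder β] (f : Fin (N+1) → β) :
    ∀ (q p : Fin (N+1)), p < q →
      (∀ k : Fin N, p ≤ k.castSucc → k.succ ≤ q → f k.castSucc < f k.succ) → f p < f q := by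
  intro q
  induction q using Fin.induction with
  | zero => intro p hp; exact absurd hp (by simp [Fin.lt_def])
  | succ i ih =>
    intro p hp h
    rcases eq_or_lt_of_le (show p ≤ i.castSucc by
        have h1 : p.val < i.val + 1 := by simpa [Fin.lt_def] using hp
        simp only [Fin.le_def, Fin.coe_castSucc]; omega) with he | hlt
    · subst he
      exact h i le_rfl le_rfl
    · have h1 : f p < f i.castSucc := by
        apply ih p hlt
        intro k hk1 hk2
        exact h k hk1 (le_trans hk2 ((Fin.castSucc_lt_succ (i := i)).le))
      exact lt_trans h1 (h i (le_of_lt hlt) le_rfl)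

def Compat {N : ℕ} (π : Equiv.Perm (Fin (N+1))) (j : ℕ) :=
  {a : Fin (N+1) → Fin j // (∀ i : Fin N, a i.castSucc ≤ a i.succ) ∧
    (∀ i : Fin N, π i.succ < π i.castSucc → a i.castSucc < a i.succ)}

instance {N : ℕ} (π : Equiv.Perm (Fin (N+1))) (j : ℕ) : Fintype (Compat π j) := by
  unfold Compat; infer_instance

lemma card_compat {N : ℕ} (π : Equiv.Perm (Fin (N+1))) (j : ℕ) :
    Fintype.card (Compat π j) = (j + N - (desF ⇑π).card).choose (N+1) := by
  classical
  set D := desF ⇑π with hD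
  set d := D.card with hd
  have hdN : d ≤ N := desF_card_le _
  rcases Nat.eq_zero_or_pos j with rfl | hj
  · have : IsEmpty (Compat π 0) := ⟨fun a => (a.1 0).elim0⟩
    rw [Fintype.card_eq_zero, eq_comm]
    apply Nat.choose_eq_zero_of_lt; omega
  set S : ℕ → ℕ := fun v => ∑ k ∈ D, (if (k : ℕ) < v then 1 else 0) with hS
  have hSeq : ∀ v, S v = ∑ k ∈ D, (if (k : ℕ) < v then 1 else 0) := fun v => rfl
  set c : ℕ → ℕ := fun v => v - S v with hc
  have hceq : ∀ v, c v = v - S v := fun v => rfl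
  have hS_le_d : ∀ v, S v ≤ d := by
    intro v
    calc S v ≤ ∑ k ∈ D, 1 := by
          apply Finset.sum_le_sum; intro k _; split <;> omega
      _ = d := by simp [hd]
  have hstep : ∀ v, S (v + 1) = S v + (∑ k ∈ D, if (k : ℕ) = v then 1 else 0) := by
    intro v
    rw [hSeq, hSeq, ← Finset.sum_add_distrib]
    apply Finset.sum_congr rfl; intro k _; split_ifs <;> omega
  have hsingle : ∀ i : Fin N, (∑ k ∈ D, if (k : ℕ) = (i : ℕ) then 1 else 0)
      = if i ∈ D then 1 else 0 := by
    intro i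
    rw [show (fun k : Fin N => if (k : ℕ) = (i : ℕ) then (1 : ℕ) else 0)
        = fun k => if k = i then 1 else 0 from funext fun k => by simp [Fin.val_inj]]
    exact Finset.sum_ite_eq' D i (fun _ => 1)
  have hone : ∀ v, (∑ k ∈ D, if (k : ℕ) = v then 1 else 0) ≤ 1 := by
    intro v
    rcases lt_or_ge v N with hw | hw
    · rw [show v = ((⟨v, hw⟩ : Fin N) : ℕ) from rfl, hsingle ⟨v, hw⟩]; split <;> omega
    · have hz : (∑ k ∈ D, if (k : ℕ) = v then 1 else 0) = 0 :=
        Finset.sum_eq_zero (fun k hk => by rw [if_neg]; have := k.2; omega)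
      omega
  have hS_le_v : ∀ v, S v ≤ v := by
    intro v; induction v with
    | zero => simp [hSeq]
    | succ w ih =>
      have := hstep w
      have := hone w
      omega
  have hSN : S N = d := by
    rw [hSeq, Finset.sum_congr rfl (fun k hk => if_pos k.2), hd, Finset.card_eq_sum_ones]
  have hcmono : Monotone c := by
    apply monotone_nat_of_le_succ
    intro v
    have h1 := hstep v
    have h2 := hS_le_v v
    have h3 := hone v
    have h4 := hceq v
    have h5 := hceq (v+1)
    omega
  have hcle : ∀ i : Fin (N+1), c i ≤ N - d := by
    intro i
    have h1 := hcmono (show (i : ℕ) ≤ N by omega)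
    have h2 := hceq N
    rw [hSN] at h2
    omega
  have hcstep : ∀ i : Fin N, c ((i : ℕ) + 1) = c (i : ℕ) + (if i ∈ D then 0 else 1) := by
    intro i
    have h1 := hstep (i : ℕ)
    have h2 := hsingle i
    have h3 := hS_le_v (i : ℕ)
    have h4 := hceq (i : ℕ)
    have h5 := hceq ((i : ℕ) + 1)
    by_cases hmem : i ∈ D <;> simp only [hmem, if_true, if_false] at h2 ⊢ <;> omega
  set M := j + N - d with hM
  have e : Compat π j ≃ {g : Fin (N+1) → Fin M // StrictMono g} := by
    refine
      { toFun := fun a => ⟨fun i => ⟨(a.1 i : ℕ) + c (i : ℕ), by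
          have h1 := (a.1 i).2
          have h2 := hcle i
          omega⟩, ?_⟩
        invFun := fun g => ⟨fun i => ⟨(g.1 i : ℕ) - c (i : ℕ), by
          have hadj : ∀ k : Fin N, ((g.1 k.castSucc : ℕ)) < g.1 k.succ :=
            fun k => g.2 (Fin.castSucc_lt_succ (i := k))
          have h1 := gap_lemma (g := fun t => ((g.1 t : ℕ))) hadj i (Fin.last N) (Fin.le_last i)
          have h2 := (g.1 (Fin.last N)).2
          have h3 := hS_le_d (i : ℕ)
          have h4 := hS_le_v (i : ℕ)
          have h5 := hceq (i : ℕ)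
          have h6 : (i : ℕ) ≤ N := by omega
          simp only [Fin.val_last] at h1
          omega⟩, ?_, ?_⟩
        left_inv := ?_
        right_inv := ?_ }
    · -- strict mono of forward image
      rw [Fin.strictMono_iff_lt_succ]
      intro i
      simp only [Fin.lt_def, Fin.coe_castSucc, Fin.val_succ]
      have hc1 := hcstep i
      by_cases hmem : i ∈ D
      · have hdesc : π i.succ < π i.castSucc := (Finset.mem_filter.mp hmem).2
        have h1 : (a.1 i.castSucc : ℕ) < a.1 i.succ := a.2.2 i hdesc
        simp only [hmem, if_true] at hc1
        omega
      · have h1 : (a.1 i.castSucc : ℕ) ≤ a.1 i.succ := a.2.1 i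
        simp only [hmem, if_false] at hc1
        omega
    · -- adjacent mono of inverse image
      intro i
      have hadj : ∀ k : Fin N, ((g.1 k.castSucc : ℕ)) < g.1 k.succ :=
        fun k => g.2 (Fin.castSucc_lt_succ (i := k))
      have h1 := hadj i
      have hge : c (i.castSucc : ℕ) ≤ (g.1 i.castSucc : ℕ) := by
        have := gap_lemma (g := fun t => ((g.1 t : ℕ))) hadj 0 i.castSucc (Fin.zero_le _)
        have h4 := hS_le_v (i.castSucc : ℕ)
        have h5 := hceq (i.castSucc : ℕ)
        simp only [Fin.val_zero] at this
        omega
      have hc1 := hcstep i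
      simp only [Fin.le_def, Fin.coe_castSucc, Fin.val_succ] at *
      by_cases hmem : i ∈ D <;> simp only [hmem, if_true, if_false] at hc1 <;> omega
    · -- strict at descents for inverse image
      intro i hdesc
      have hadj : ∀ k : Fin N, ((g.1 k.castSucc : ℕ)) < g.1 k.succ :=
        fun k => g.2 (Fin.castSucc_lt_succ (i := k))
      have h1 := hadj i
      have hge : c (i.castSucc : ℕ) ≤ (g.1 i.castSucc : ℕ) := by
        have := gap_lemma (g := fun t => ((g.1 t : ℕ))) hadj 0 i.castSucc (Fin.zero_le _)
        have h4 := hS_le_v (i.castSucc : ℕ)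
        have h5 := hceq (i.castSucc : ℕ)
        simp only [Fin.val_zero] at this
        omega
      have hmem : i ∈ D := Finset.mem_filter.mpr ⟨Finset.mem_univ i, hdesc⟩
      have hc1 := hcstep i
      simp only [hmem, if_true] at hc1
      simp only [Fin.lt_def, Fin.coe_castSucc, Fin.val_succ] at *
      omega
    · rintro ⟨a, ha⟩
      apply Subtype.ext
      funext i
      apply Fin.ext
      simp [Nat.add_sub_cancel]
    · rintro ⟨g, hg⟩
      apply Subtype.ext
      funext i
      apply Fin.ext
      have hadj : ∀ k : Fin N, ((g k.castSucc : ℕ)) < g k.succ :=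
        fun k => hg (Fin.castSucc_lt_succ (i := k))
      have hge : c (i : ℕ) ≤ (g i : ℕ) := by
        have := gap_lemma (g := fun t => ((g t : ℕ))) hadj 0 i (Fin.zero_le _)
        have h4 := hS_le_v (i : ℕ)
        have h5 := hceq (i : ℕ)
        simp only [Fin.val_zero] at this
        omega
      simp [Nat.sub_add_cancel hge]
  rw [Fintype.card_congr e, card_strictMono_fin]


section Master

variable {N j m : ℕ}

/-- key: permutation is strictly increasing on blocks where `s` is constant -/
lemma sort_window {σ : Equiv.Perm (Fin (N+1))} {s : Fin (N+1) → Fin m}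
    (hmono : ∀ i : Fin N, s i.castSucc ≤ s i.succ)
    (hstrict : ∀ i : Fin N, σ i.succ < σ i.castSucc → s i.castSucc < s i.succ) :
    Tuple.sort (fun i => s (σ⁻¹ i)) = σ := by
  have hsm : Monotone s := Fin.monotone_iff_le_succ.mpr hmono
  symm
  rw [Tuple.eq_sort_iff]
  constructor
  · intro u v huv
    simp only [Function.comp_apply, Equiv.Perm.coe_inv, Equiv.symm_apply_apply]
    exact hsm huv
  · intro u v huv heq
    simp only [Function.comp_apply, Equiv.Perm.coe_inv, Equiv.symm_apply_apply] at heq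
    refine window_lt (fun t => σ t) v u huv ?_
    intro k hk1 hk2
    have h1 : s u ≤ s k.castSucc := hsm hk1
    have h2 : s k.castSucc ≤ s k.succ := hmono k
    have h3 : s k.succ ≤ s v := hsm hk2
    have he1 : s k.castSucc = s k.succ := le_antisymm h2 (by rw [← heq] at h3; exact le_trans h3 h1)
    have hnd : ¬ σ k.succ < σ k.castSucc := fun hc => absurd (hstrict k hc) (by simp [he1])
    have hne : σ k.castSucc ≠ σ k.succ :=
      fun hc => absurd (σ.injective hc) (Fin.castSucc_lt_succ (i := k)).ne
    exact lt_of_le_of_ne (not_lt.mp hnd) hne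

/-- fibers of `Tuple.sort` are compatible sequences -/
def masterEquiv (σ : Equiv.Perm (Fin (N+1))) :
    {y : Fin (N+1) → Fin j // Tuple.sort y = σ} ≃ Compat σ j where
  toFun y := ⟨fun r => y.1 (σ r), by
    have hm : Monotone (y.1 ∘ ⇑(Tuple.sort y.1)) := Tuple.monotone_sort y.1
    rw [y.2] at hm
    refine ⟨fun i => hm (Fin.castSucc_lt_succ (i := i)).le, fun i hdesc => ?_⟩
    have hle : y.1 (σ i.castSucc) ≤ y.1 (σ i.succ) := hm (Fin.castSucc_lt_succ (i := i)).le
    rcases eq_or_lt_of_le hle with he | h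
    · exact absurd ((Tuple.eq_sort_iff.mp y.2.symm).2 i.castSucc i.succ
        (Fin.castSucc_lt_succ (i := i)) he) (by simp [not_lt, hdesc.le])
    · exact h⟩
  invFun s := ⟨fun i => s.1 (σ⁻¹ i), sort_window s.2.1 s.2.2⟩
  left_inv y := by
    apply Subtype.ext
    funext i
    simp [Equiv.Perm.coe_inv, Equiv.apply_symm_apply]
  right_inv s := by
    apply Subtype.ext
    funext r
    simp [Equiv.Perm.coe_inv, Equiv.symm_apply_apply]

lemma card_sort_fiber (σ : Equiv.Perm (Fin (N+1))) :
    (univ.filter (fun y : Fin (N+1) → Fin j => Tuple.sort y = σ)).card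
      = (j + N - (desF ⇑σ).card).choose (N+1) := by
  classical
  rw [← Fintype.card_subtype, Fintype.card_congr (masterEquiv σ), card_compat]

lemma worpitzky_count (N j : ℕ) :
    ∑ σ : Equiv.Perm (Fin (N+1)), (j + N - (desF ⇑σ).card).choose (N+1) = j^(N+1) := by
  classical
  have h0 : j^(N+1) = Fintype.card (Fin (N+1) → Fin j) := by
    rw [Fintype.card_fun]; simp
  rw [h0, ← Finset.card_univ,
    Finset.card_eq_sum_card_fiberwise
      (f := fun y : Fin (N+1) → Fin j => Tuple.sort y) (t := univ) (fun x _ => mem_univ _)]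
  exact (Finset.sum_congr rfl (fun σ _ => (card_sort_fiber σ))).symm

end Master


end Aux
namespace Part2
open Aux



variable {N j m : ℕ}

lemma card_monoAdj (L : Type*) [LinearOrder L] [Fintype L] (N : ℕ) :
    Fintype.card {w : Fin (N+1) → L // ∀ i : Fin N, w i.castSucc ≤ w i.succ}
      = (Fintype.card L + N).choose (N+1) := by
  classical
  let e : Fin (Fintype.card L) ≃o L := monoEquivOfFin L rfl
  have E : {w : Fin (N+1) → L // ∀ i : Fin N, w i.castSucc ≤ w i.succ}
      ≃ Compat (1 : Equiv.Perm (Fin (N+1))) (Fintype.card L) :=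
    { toFun := fun w => ⟨fun i => e.symm (w.1 i),
        ⟨fun i => e.symm.monotone (w.2 i), fun i h => absurd h (by
          simp only [Equiv.Perm.coe_one, id_eq]
          exact not_lt.mpr (Fin.castSucc_lt_succ (i := i)).le)⟩⟩
      invFun := fun a => ⟨fun i => e (a.1 i), fun i => e.monotone (a.2.1 i)⟩
      left_inv := fun w => Subtype.ext (funext fun i => e.apply_symm_apply _)
      right_inv := fun a => Subtype.ext (funext fun i => e.symm_apply_apply _) }
  rw [Fintype.card_congr E, card_compat]
  have hempty : desF ⇑(1 : Equiv.Perm (Fin (N+1))) = ∅ := by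
    rw [desF]
    exact Finset.filter_false_of_mem (fun i _ => by
      simp only [Equiv.Perm.coe_one, id_eq]
      exact not_lt.mpr (Fin.castSucc_lt_succ (i := i)).le)
  rw [hempty]
  simp

abbrev LexJM (j m : ℕ) := Fin j ×ₗ Fin m

abbrev TT (N j m : ℕ) :=
  {w : Fin (N+1) → LexJM j m // ∀ i : Fin N, w i.castSucc ≤ w i.succ}

/-- CRS fiber equivalence -/
def crsFiberEquiv (σ : Equiv.Perm (Fin (N+1))) :
    {w : TT N j m // Tuple.sort (fun i => (ofLex (w.1 i)).2) = σ}
      ≃ Compat σ⁻¹ j × Compat σ m where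
  toFun w := by
    refine ⟨⟨fun i => (ofLex (w.1.1 i)).1, ?_, ?_⟩, ⟨fun r => (ofLex (w.1.1 (σ r))).2, ?_, ?_⟩⟩
    · -- a adjacent monotone
      intro i
      have h := w.1.2 i
      rw [← toLex_ofLex (w.1.1 i.castSucc), ← toLex_ofLex (w.1.1 i.succ), Prod.Lex.le_iff] at h
      rcases h with h | ⟨h, _⟩
      · exact h.le
      · exact h.le
    · -- a strict at descents of σ⁻¹
      intro i hdesc
      have hm : Monotone ((fun t => (ofLex (w.1.1 t)).2) ∘ ⇑(Tuple.sort (fun t => (ofLex (w.1.1 t)).2))) :=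
        Tuple.monotone_sort _
      rw [w.2] at hm
      have hstricty : (ofLex (w.1.1 i.succ)).2 < (ofLex (w.1.1 i.castSucc)).2 := by
        have hle : (ofLex (w.1.1 (σ (σ⁻¹ i.succ)))).2 ≤ (ofLex (w.1.1 (σ (σ⁻¹ i.castSucc)))).2 :=
          hm hdesc.le
        have hne : (ofLex (w.1.1 (σ (σ⁻¹ i.succ)))).2 ≠ (ofLex (w.1.1 (σ (σ⁻¹ i.castSucc)))).2 := by
          intro he
          have h2 := (Tuple.eq_sort_iff.mp w.2.symm).2 _ _ hdesc he
          simp only [Equiv.Perm.coe_inv, Equiv.apply_symm_apply] at h2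
          exact absurd h2 (not_lt.mpr (Fin.castSucc_lt_succ (i := i)).le)
        have h := lt_of_le_of_ne hle hne
        simpa only [Equiv.Perm.coe_inv, Equiv.apply_symm_apply] using h
      have h := w.1.2 i
      rw [← toLex_ofLex (w.1.1 i.castSucc), ← toLex_ofLex (w.1.1 i.succ), Prod.Lex.le_iff] at h
      rcases h with h | ⟨_, h2⟩
      · exact h
      · exact absurd h2 (not_le.mpr hstricty)
    · -- s adjacent monotone
      intro r
      have hm : Monotone ((fun t => (ofLex (w.1.1 t)).2) ∘ ⇑(Tuple.sort (fun t => (ofLex (w.1.1 t)).2))) :=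
        Tuple.monotone_sort _
      rw [w.2] at hm
      exact hm (Fin.castSucc_lt_succ (i := r)).le
    · -- s strict at descents of σ
      intro r hdesc
      have hm : Monotone ((fun t => (ofLex (w.1.1 t)).2) ∘ ⇑(Tuple.sort (fun t => (ofLex (w.1.1 t)).2))) :=
        Tuple.monotone_sort _
      rw [w.2] at hm
      have hle : (ofLex (w.1.1 (σ r.castSucc))).2 ≤ (ofLex (w.1.1 (σ r.succ))).2 :=
        hm (Fin.castSucc_lt_succ (i := r)).le
      rcases eq_or_lt_of_le hle with he | h
      · exact absurd ((Tuple.eq_sort_iff.mp w.2.symm).2 _ _ (Fin.castSucc_lt_succ (i := r)) he)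
          (not_lt.mpr hdesc.le)
      · exact h
  invFun p := by
    refine ⟨⟨fun i => toLex (p.1.1 i, p.2.1 (σ⁻¹ i)), ?_⟩, ?_⟩
    · -- adjacent monotone in lex
      intro i
      rw [Prod.Lex.le_iff]
      rcases eq_or_lt_of_le (p.1.2.1 i) with he | h
      · right
        refine ⟨he, ?_⟩
        have hnd : ¬ σ⁻¹ i.succ < σ⁻¹ i.castSucc := fun hc =>
          absurd (p.1.2.2 i hc) (by simp [he])
        have hne : σ⁻¹ i.castSucc ≠ σ⁻¹ i.succ := fun hc =>
          absurd (σ⁻¹.injective hc) (Fin.castSucc_lt_succ (i := i)).ne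
        have hmono : Monotone p.2.1 := Fin.monotone_iff_le_succ.mpr p.2.2.1
        exact hmono (lt_of_le_of_ne (not_lt.mp hnd) hne).le
      · exact Or.inl h
    · -- fiber condition
      have : (fun i => (ofLex (toLex (p.1.1 i, p.2.1 (σ⁻¹ i)))).2) = fun i => p.2.1 (σ⁻¹ i) := by
        funext i; simp
      rw [this]
      exact sort_window p.2.2.1 p.2.2.2
  left_inv w := by
    apply Subtype.ext
    apply Subtype.ext
    funext i
    simp only [Equiv.Perm.coe_inv, Equiv.apply_symm_apply]
    rw [← toLex_ofLex (w.1.1 i)]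
    rfl
  right_inv p := by
    refine Prod.ext ?_ ?_
    · apply Subtype.ext
      funext i
      simp
    · apply Subtype.ext
      funext r
      simp [Equiv.Perm.coe_inv, Equiv.symm_apply_apply]

lemma crs_count (N j m : ℕ) :
    ∑ π : Equiv.Perm (Fin (N+1)),
      (j + N - (desF ⇑π).card).choose (N+1) * (m + N - (desF ⇑π⁻¹).card).choose (N+1)
      = (j * m + N).choose (N+1) := by
  classical
  have h0 : (j * m + N).choose (N+1) = Fintype.card (TT N j m) := by
    rw [card_monoAdj]
    congr 2
    simp [LexJM]
  rw [h0, ← Finset.card_univ,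
    Finset.card_eq_sum_card_fiberwise
      (f := fun w : TT N j m => Tuple.sort (fun i => (ofLex (w.1 i)).2)) (t := univ)
      (fun x _ => mem_univ _)]
  have h1 : ∀ σ : Equiv.Perm (Fin (N+1)),
      (univ.filter (fun w : TT N j m => Tuple.sort (fun i => (ofLex (w.1 i)).2) = σ)).card
        = (j + N - (desF ⇑σ⁻¹).card).choose (N+1) * (m + N - (desF ⇑σ).card).choose (N+1) := by
    intro σ
    rw [← Fintype.card_subtype, Fintype.card_congr (crsFiberEquiv σ), Fintype.card_prod,
      card_compat, card_compat]
  rw [Finset.sum_congr rfl (fun σ _ => h1 σ)]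
  exact Fintype.sum_equiv (Equiv.inv _) _ _ (fun π => by simp)

end Part2
namespace LogPart
open PowerSeries

noncomputable def geom : PowerSeries ℚ := PowerSeries.mk fun _ => (1 : ℚ)

lemma one_sub_X_mul_geom : ((1 : ℚ⟦X⟧) - X) * geom = 1 := by
  ext n
  rw [sub_mul, one_mul, map_sub]
  cases n with
  | zero => simp [geom]
  | succ k => simp [geom, PowerSeries.coeff_succ_X_mul, PowerSeries.coeff_one]

lemma deriv_log : derivative ℚ logInvSer = geom := by
  ext n
  rw [coeff_derivative]
  simp [geom, logInvSer, coeff_mk]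
  field_simp

lemma key (k : ℕ) : ((1 : ℚ⟦X⟧) - X) * (derivative ℚ (logInvSer ^ (k+1)))
    = ((k+1 : ℕ) : ℚ⟦X⟧) * logInvSer ^ k := by
  rw [Derivation.leibniz_pow, deriv_log]
  simp only [Nat.add_sub_cancel, smul_eq_mul, nsmul_eq_mul]
  rw [show ((1:ℚ⟦X⟧) - X) * (((k+1 : ℕ) : ℚ⟦X⟧) * (logInvSer ^ k * geom))
      = ((k+1 : ℕ) : ℚ⟦X⟧) * logInvSer ^ k * (((1:ℚ⟦X⟧) - X) * geom) from by ring,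
    one_sub_X_mul_geom, mul_one]

lemma rec_c (n k : ℕ) :
    ((n : ℚ) + 1) * coeff (R := ℚ) (n+1) (logInvSer ^ (k+1))
      = (n : ℚ) * coeff (R := ℚ) n (logInvSer ^ (k+1)) + ((k : ℚ) + 1) * coeff (R := ℚ) n (logInvSer ^ k) := by
  have h := congrArg (coeff (R := ℚ) n) (key k)
  rw [sub_mul, one_mul, map_sub] at h
  rw [← map_natCast (PowerSeries.C (R := ℚ)) (k+1), coeff_C_mul] at h
  cases n with
  | zero =>
    rw [coeff_zero_X_mul, sub_zero, coeff_derivative] at h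
    push_cast at h ⊢
    simpa using h
  | succ p =>
    rw [coeff_succ_X_mul, coeff_derivative, coeff_derivative] at h
    push_cast at h ⊢
    linarith [h]

lemma log_eq_X_mul : logInvSer = PowerSeries.X * PowerSeries.mk (fun m => (1:ℚ)/(m+1)) := by
  ext n
  cases n with
  | zero => simp [logInvSer]
  | succ p =>
    rw [coeff_succ_X_mul]
    simp only [logInvSer, coeff_mk, if_neg (Nat.succ_ne_zero p)]
    push_cast
    ring

lemma c_zero_of_lt {n k : ℕ} (h : n < k) : coeff (R := ℚ) n (logInvSer ^ k) = 0 := by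
  rw [log_eq_X_mul, mul_pow, coeff_mul]
  apply Finset.sum_eq_zero
  intro p hp
  have hmem := Finset.HasAntidiagonal.mem_antidiagonal.mp hp
  rw [coeff_X_pow, if_neg (by omega)]
  ring

lemma sum_c (n : ℕ) (x : ℚ) :
    ∑ k ∈ range (n+1), coeff (R := ℚ) n (logInvSer ^ k) * x ^ k / (k.factorial : ℚ)
      = (∏ i ∈ range n, (x + i)) / (n.factorial : ℚ) := by
  induction n with
  | zero => simp
  | succ n ih =>
    have h0 : coeff (R := ℚ) (n+1) ((logInvSer : ℚ⟦X⟧) ^ 0) * x ^ 0 / (Nat.factorial 0 : ℚ) = 0 := by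
      simp
    rw [Finset.sum_range_succ' _ (n+1), h0, add_zero]
    have hsum1 : ∑ k ∈ range (n+1), coeff (R := ℚ) n (logInvSer ^ (k+1)) * x ^ (k+1) / ((k+1).factorial : ℚ)
        = (∏ i ∈ range n, (x + i)) / (n.factorial : ℚ)
          - coeff (R := ℚ) n ((logInvSer : ℚ⟦X⟧) ^ 0) * x ^ 0 / (Nat.factorial 0 : ℚ) := by
      have e1 := Finset.sum_range_succ'
        (fun k => coeff (R := ℚ) n (logInvSer ^ k) * x ^ k / (k.factorial : ℚ)) (n+1)
      have e2 := Finset.sum_range_succ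
        (fun k => coeff (R := ℚ) n (logInvSer ^ k) * x ^ k / (k.factorial : ℚ)) (n+1)
      rw [ih] at e2
      have e3 : coeff (R := ℚ) n ((logInvSer : ℚ⟦X⟧) ^ (n+1)) * x ^ (n+1) / ((n+1).factorial : ℚ) = 0 := by
        rw [c_zero_of_lt (by omega)]; ring
      rw [e3, add_zero] at e2
      rw [e2] at e1
      linarith [e1]
    have hstep : ∀ k ∈ range (n+1),
        coeff (R := ℚ) (n+1) (logInvSer ^ (k+1)) * x ^ (k+1) / ((k+1).factorial : ℚ)
          = ((n:ℚ) / ((n:ℚ)+1)) * (coeff (R := ℚ) n (logInvSer ^ (k+1)) * x ^ (k+1) / ((k+1).factorial : ℚ))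
            + (x / ((n:ℚ)+1)) * (coeff (R := ℚ) n (logInvSer ^ k) * x ^ k / (k.factorial : ℚ)) := by
      intro k _
      have hr := rec_c n k
      have hnpos : ((n:ℚ)+1) ≠ 0 := by positivity
      have hfac : (((k+1).factorial : ℚ)) = ((k:ℚ)+1) * (k.factorial : ℚ) := by
        rw [Nat.factorial_succ]; push_cast; ring
      have hkpos : ((k:ℚ)+1) ≠ 0 := by positivity
      have hfpos : ((k.factorial : ℚ)) ≠ 0 := by
        exact_mod_cast Nat.factorial_ne_zero k
      have hc : coeff (R := ℚ) (n+1) (logInvSer ^ (k+1))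
          = ((n:ℚ) * coeff (R := ℚ) n (logInvSer ^ (k+1)) + ((k:ℚ)+1) * coeff (R := ℚ) n (logInvSer ^ k))
            / ((n:ℚ)+1) := by
        field_simp
        linarith [hr]
      rw [hc, hfac]
      field_simp
      ring
    rw [Finset.sum_congr rfl hstep, Finset.sum_add_distrib, ← Finset.mul_sum, ← Finset.mul_sum,
      hsum1, ih]
    have h00 : coeff (R := ℚ) n ((logInvSer : ℚ⟦X⟧) ^ 0) * x ^ 0 / (Nat.factorial 0 : ℚ)
        = if n = 0 then 1 else 0 := by
      simp [PowerSeries.coeff_one]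
    rw [h00]
    rw [Finset.prod_range_succ, Nat.factorial_succ]
    have hnpos : ((n:ℚ)+1) ≠ 0 := by positivity
    have hfpos : ((n.factorial : ℚ)) ≠ 0 := by exact_mod_cast Nat.factorial_ne_zero n
    rcases Nat.eq_zero_or_pos n with rfl | hn
    · norm_num
    · rw [if_neg (by omega), sub_zero]
      push_cast
      field_simp
      ring

lemma prod_asc_nat (a n : ℕ) (ha : 1 ≤ a) :
    ∏ i ∈ range n, (a + i) = n.factorial * (a + n - 1).choose n := by
  induction n with
  | zero => simp
  | succ n ih =>
    rw [Finset.prod_range_succ, ih, Nat.factorial_succ]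
    have h := Nat.add_one_mul_choose_eq (a + n - 1) n
    have he : a + n - 1 + 1 = a + n := by omega
    rw [he] at h
    have he2 : a + (n+1) - 1 = a + n := by omega
    rw [he2]
    calc n.factorial * (a + n - 1).choose n * (a + n)
        = n.factorial * ((a+n) * (a + n - 1).choose n) := by ring
      _ = n.factorial * ((a + n).choose (n+1) * (n+1)) := by rw [← h]
      _ = (n+1) * n.factorial * (a + n).choose (n+1) := by ring

end LogPart
namespace PolyPart
open MvPolynomial

noncomputable def pairF (a b : ℕ) : Fin 2 →₀ ℕ := Finsupp.single 0 a + Finsupp.single 1 b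

lemma pairF_apply0 (a b : ℕ) : pairF a b 0 = a := by
  simp [pairF, Finsupp.single_apply]

lemma pairF_apply1 (a b : ℕ) : pairF a b 1 = b := by
  simp [pairF, Finsupp.single_apply]

lemma eq_pairF (d : Fin 2 →₀ ℕ) : d = pairF (d 0) (d 1) := by
  ext i
  fin_cases i
  · show d 0 = pairF (d 0) (d 1) 0
    rw [pairF_apply0]
  · show d 1 = pairF (d 0) (d 1) 1
    rw [pairF_apply1]

noncomputable def Lf (n j m : ℕ) (P : MvPolynomial (Fin 2) ℚ) : ℚ :=
  ∑ a ∈ range (j+1), ∑ b ∈ range (m+1),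
    P.coeff (pairF a b) * (((n + j - a).choose n : ℕ) : ℚ) * (((n + m - b).choose n : ℕ) : ℚ)

lemma Lf_sum {ι : Type*} (n j m : ℕ) (s : Finset ι) (f : ι → MvPolynomial (Fin 2) ℚ) :
    Lf n j m (∑ x ∈ s, f x) = ∑ x ∈ s, Lf n j m (f x) := by
  unfold Lf
  simp only [MvPolynomial.coeff_sum, Finset.sum_mul]
  calc (∑ a ∈ range (j+1), ∑ b ∈ range (m+1), ∑ x ∈ s,
        (f x).coeff (pairF a b) * (((n + j - a).choose n : ℕ) : ℚ) * (((n + m - b).choose n : ℕ) : ℚ))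
      = ∑ a ∈ range (j+1), ∑ x ∈ s, ∑ b ∈ range (m+1),
        (f x).coeff (pairF a b) * (((n + j - a).choose n : ℕ) : ℚ) * (((n + m - b).choose n : ℕ) : ℚ) := by
        exact Finset.sum_congr rfl (fun a _ => Finset.sum_comm)
    _ = _ := Finset.sum_comm

lemma Lf_C_mul (n j m : ℕ) (r : ℚ) (P : MvPolynomial (Fin 2) ℚ) :
    Lf n j m (MvPolynomial.C r * P) = r * Lf n j m P := by
  unfold Lf
  rw [Finset.mul_sum]
  apply Finset.sum_congr rfl
  intro a _
  rw [Finset.mul_sum]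
  apply Finset.sum_congr rfl
  intro b _
  rw [MvPolynomial.coeff_C_mul]
  ring

lemma Lf_sub (n j m : ℕ) (P Q : MvPolynomial (Fin 2) ℚ) :
    Lf n j m (P - Q) = Lf n j m P - Lf n j m Q := by
  unfold Lf
  rw [← Finset.sum_sub_distrib]
  apply Finset.sum_congr rfl
  intro a _
  rw [← Finset.sum_sub_distrib]
  apply Finset.sum_congr rfl
  intro b _
  rw [MvPolynomial.coeff_sub]
  ring

lemma Lf_monomial {n : ℕ} (hn : 1 ≤ n) (j m p q : ℕ) (c : ℚ) :
    Lf n j m (MvPolynomial.monomial (pairF p q) c)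
      = c * (((n + j - p).choose n : ℕ) : ℚ) * (((n + m - q).choose n : ℕ) : ℚ) := by
  have hcoeff : ∀ a b : ℕ, MvPolynomial.coeff (pairF a b) (MvPolynomial.monomial (pairF p q) c)
      = if a = p ∧ b = q then c else 0 := by
    intro a b
    rw [MvPolynomial.coeff_monomial]
    by_cases h : a = p ∧ b = q
    · rcases h with ⟨rfl, rfl⟩
      simp
    · rw [if_neg, if_neg h]
      intro hc
      have h0 := DFunLike.congr_fun hc 0
      have h1 := DFunLike.congr_fun hc 1
      rw [pairF_apply0, pairF_apply0] at h0
      rw [pairF_apply1, pairF_apply1] at h1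
      exact h ⟨h0.symm, h1.symm⟩
  unfold Lf
  simp only [hcoeff]
  rcases le_or_gt p j with hp | hp
  · rcases le_or_gt q m with hq | hq
    · rw [Finset.sum_eq_single_of_mem p (Finset.mem_range.mpr (by omega))]
      · rw [Finset.sum_eq_single_of_mem q (Finset.mem_range.mpr (by omega))]
        · simp
        · intro b _ hb
          rw [if_neg (by tauto)]
          ring
      · intro a _ ha
        apply Finset.sum_eq_zero
        intro b _
        rw [if_neg (by tauto)]
        ring
    · have hz : (((n + m - q).choose n : ℕ) : ℚ) = 0 := by
        rw [Nat.choose_eq_zero_of_lt (by omega)]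
        simp
      rw [hz, mul_zero]
      apply Finset.sum_eq_zero
      intro a _
      apply Finset.sum_eq_zero
      intro b hb
      rw [if_neg (by rintro ⟨rfl, rfl⟩; exact absurd (Finset.mem_range.mp hb) (by omega))]
      ring
  · have hz : (((n + j - p).choose n : ℕ) : ℚ) = 0 := by
      rw [Nat.choose_eq_zero_of_lt (by omega)]
      simp
    rw [hz, mul_zero, zero_mul]
    apply Finset.sum_eq_zero
    intro a ha
    apply Finset.sum_eq_zero
    intro b _
    rw [if_neg (by rintro ⟨rfl, rfl⟩; exact absurd (Finset.mem_range.mp ha) (by omega))]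
    ring

lemma Lf_inj {n : ℕ} (hn : 1 ≤ n) (P Q : MvPolynomial (Fin 2) ℚ)
    (h : ∀ j m : ℕ, Lf n j m P = Lf n j m Q) : P = Q := by
  have hR : ∀ j m : ℕ, Lf n j m (P - Q) = 0 := by
    intro j m
    rw [Lf_sub, h j m, sub_self]
  have hz : ∀ s : ℕ, ∀ j m : ℕ, j + m ≤ s → (P - Q).coeff (pairF j m) = 0 := by
    intro s
    induction s with
    | zero =>
      intro j m hjm
      have hj : j = 0 := by omega
      have hm : m = 0 := by omega
      subst hj; subst hm
      have h0 := hR 0 0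
      unfold Lf at h0
      simp only [Nat.zero_add, Finset.sum_range_one] at h0
      rw [show n + 0 - 0 = n from by omega, Nat.choose_self, Nat.cast_one, mul_one, mul_one] at h0
      exact h0
    | succ s ih =>
      intro j m hjm
      rcases le_or_gt (j + m) s with hle | hgt
      · exact ih j m hle
      · have h0 := hR j m
        unfold Lf at h0
        rw [Finset.sum_eq_single_of_mem j (Finset.mem_range.mpr (by omega))] at h0
        · rw [Finset.sum_eq_single_of_mem m (Finset.mem_range.mpr (by omega))] at h0
          · rw [show n + j - j = n from by omega, show n + m - m = n from by omega,
              Nat.choose_self, Nat.cast_one, mul_one, mul_one] at h0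
            exact h0
          · intro b hb hbm
            rw [ih j b (by have := Finset.mem_range.mp hb; omega)]
            ring
        · intro a ha haj
          apply Finset.sum_eq_zero
          intro b hb
          rw [ih a b (by
            have h1 := Finset.mem_range.mp ha
            have h2 := Finset.mem_range.mp hb
            omega)]
          ring
  have : P - Q = 0 := by
    apply MvPolynomial.ext
    intro d
    rw [MvPolynomial.coeff_zero, eq_pairF d]
    exact hz (d 0 + d 1) (d 0) (d 1) le_rfl
  linear_combination this

lemma pascal_nat (n u t : ℕ) (hn : 1 ≤ n) :
    (n+1+u-t).choose (n+1) = (n+u-t).choose n + (n+1+u-(t+1)).choose (n+1) := by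
  rcases le_or_gt t u with h | h
  · have h1 : n+1+u-t = (n+u-t)+1 := by omega
    have h2 : n+1+u-(t+1) = n+u-t := by omega
    rw [h1, h2, Nat.choose_succ_succ']
  · rw [Nat.choose_eq_zero_of_lt (by omega), Nat.choose_eq_zero_of_lt (by omega),
      Nat.choose_eq_zero_of_lt (by omega)]
end PolyPart
namespace VPart
open Aux PolyPart

noncomputable def Vsum (p k j : ℕ) : ℚ :=
  ∑ i ∈ range (p+1), ∑ π : Equiv.Perm (Fin k),
    (-1:ℚ)^i * ((p.choose i : ℕ) : ℚ) * ((((k+p) + j - (i + desP π + 1)).choose (k+p) : ℕ) : ℚ)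

lemma Vsum_base (K j : ℕ) : Vsum 0 (K+1) j = ((j:ℚ))^(K+1) := by
  have h : Vsum 0 (K+1) j
      = ∑ π : Equiv.Perm (Fin (K+1)), (((j + K - (desF ⇑π).card).choose (K+1) : ℕ) : ℚ) := by
    unfold Vsum
    rw [show (0:ℕ)+1 = 1 from rfl, Finset.sum_range_one]
    apply Finset.sum_congr rfl
    intro π _
    have h1 := desF_card_le (⇑π)
    have h2 : (K+1+0) + j - (0 + desP π + 1) = j + K - (desF ⇑π).card := by
      rw [desP_eq]; omega
    rw [h2]
    norm_num
  rw [h, ← Nat.cast_sum, worpitzky_count K j]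
  norm_cast

lemma Vsum_succ (p K j : ℕ) : Vsum (p+1) (K+1) j = Vsum p (K+1) j := by
  set k := K + 1 with hk
  set G : ℕ → ℚ := fun i => ∑ π : Equiv.Perm (Fin k),
    ((((k+(p+1)) + j - (i + desP π + 1)).choose (k+(p+1)) : ℕ) : ℚ) with hG
  have hGeq : ∀ i : ℕ, G i = ∑ π : Equiv.Perm (Fin k),
      ((((k+(p+1)) + j - (i + desP π + 1)).choose (k+(p+1)) : ℕ) : ℚ) := fun i => rfl
  have hV : Vsum (p+1) k j = ∑ i ∈ range (p+2), (-1:ℚ)^i * (((p+1).choose i : ℕ) : ℚ) * G i := by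
    unfold Vsum
    apply Finset.sum_congr rfl
    intro i _
    rw [hGeq, Finset.mul_sum]
  have hVp : Vsum p k j = ∑ i ∈ range (p+1), (-1:ℚ)^i * ((p.choose i : ℕ) : ℚ)
      * (∑ π : Equiv.Perm (Fin k), ((((k+p) + j - (i + desP π + 1)).choose (k+p) : ℕ) : ℚ)) := by
    unfold Vsum
    apply Finset.sum_congr rfl
    intro i _
    rw [Finset.mul_sum]
  rw [hV, hVp]
  rw [Finset.sum_range_succ' _ (p+1)]
  have hsplit : ∀ i : ℕ, ((-1:ℚ))^(i+1) * (((p+1).choose (i+1) : ℕ) : ℚ) * G (i+1)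
      = -((-1:ℚ)^i * ((p.choose i : ℕ) : ℚ) * G (i+1))
        + (-1:ℚ)^(i+1) * ((p.choose (i+1) : ℕ) : ℚ) * G (i+1) := by
    intro i
    rw [Nat.choose_succ_succ]
    push_cast
    ring
  rw [Finset.sum_congr rfl (fun i _ => hsplit i), Finset.sum_add_distrib]
  have htel : (∑ i ∈ range (p+1), (-1:ℚ)^(i+1) * ((p.choose (i+1) : ℕ) : ℚ) * G (i+1))
      + (-1:ℚ)^0 * ((((p+1)).choose 0 : ℕ) : ℚ) * G 0
      = ∑ i ∈ range (p+1), (-1:ℚ)^i * ((p.choose i : ℕ) : ℚ) * G i := by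
    have e1 := Finset.sum_range_succ' (fun i => (-1:ℚ)^i * ((p.choose i : ℕ) : ℚ) * G i) (p+1)
    have e2 := Finset.sum_range_succ (fun i => (-1:ℚ)^i * ((p.choose i : ℕ) : ℚ) * G i) (p+1)
    rw [Nat.choose_succ_self] at e2
    simp only [Nat.cast_zero, mul_zero, zero_mul, add_zero] at e2
    simp only [pow_zero, Nat.choose_zero_right, Nat.cast_one, one_mul, mul_one] at e1 ⊢
    linarith [e1, e2]
  rw [add_assoc, htel, ← Finset.sum_add_distrib]
  apply Finset.sum_congr rfl
  intro i _
  have hpas : G i - G (i+1)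
      = ∑ π : Equiv.Perm (Fin k), ((((k+p) + j - (i + desP π + 1)).choose (k+p) : ℕ) : ℚ) := by
    rw [hGeq, hGeq, ← Finset.sum_sub_distrib]
    apply Finset.sum_congr rfl
    intro π _
    have hp := pascal_nat (k+p) j (i + desP π + 1) (by omega)
    have h1 : (k+(p+1)) + j - (i + 1 + desP π + 1) = (k+p)+1 + j - ((i + desP π + 1)+1) := by omega
    have h2 : (k+(p+1)) + j - (i + desP π + 1) = (k+p)+1 + j - (i + desP π + 1) := by omega
    have h3 : k+(p+1) = (k+p)+1 := by omega
    rw [h1, h2, h3, hp]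
    push_cast
    ring
  rw [← hpas]
  ring

lemma Vsum_eq (p K j : ℕ) : Vsum p (K+1) j = ((j:ℚ))^(K+1) := by
  induction p with
  | zero => exact Vsum_base K j
  | succ p ih => rw [Vsum_succ, ih]

end VPart
namespace Final
open MvPolynomial PolyPart Aux Part2 VPart LogPart

lemma expand_one_sub_X_pow (w : Fin 2) (p : ℕ) :
    ((1 - MvPolynomial.X w : MvPolynomial (Fin 2) ℚ))^p
      = ∑ i ∈ range (p+1), MvPolynomial.C ((-1:ℚ)^i * ((p.choose i : ℕ) : ℚ)) * (MvPolynomial.X w)^i := by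
  rw [sub_eq_add_neg, add_comm, add_pow]
  apply Finset.sum_congr rfl
  intro i _
  have h2 : ((-MvPolynomial.X w : MvPolynomial (Fin 2) ℚ))^i
      = MvPolynomial.C ((-1:ℚ)^i) * (MvPolynomial.X w)^i := by
    rw [neg_pow]
    congr 1
    rw [map_pow, map_neg, map_one]
  have h1 : ((p.choose i : ℕ) : MvPolynomial (Fin 2) ℚ)
      = MvPolynomial.C (((p.choose i : ℕ)) : ℚ) := by
    rw [map_natCast]
  rw [one_pow, mul_one, h2, h1, map_mul]
  ring

lemma eulerPoly_succ (v : Fin 2) (K : ℕ) :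
    eulerPoly v (K+1) = ∑ π : Equiv.Perm (Fin (K+1)), (MvPolynomial.X v)^(desP π + 1) := by
  rw [eulerPoly, if_neg (Nat.succ_ne_zero K)]

lemma expand_factor (v : Fin 2) (p K : ℕ) :
    ((1 - MvPolynomial.X v)^p * eulerPoly v (K+1) : MvPolynomial (Fin 2) ℚ)
      = ∑ q ∈ (range (p+1)) ×ˢ (univ : Finset (Equiv.Perm (Fin (K+1)))),
          MvPolynomial.C ((-1:ℚ)^q.1 * ((p.choose q.1 : ℕ) : ℚ))
            * (MvPolynomial.X v)^(q.1 + desP q.2 + 1) := by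
  rw [expand_one_sub_X_pow, eulerPoly_succ, Finset.sum_mul_sum, Finset.sum_product]
  apply Finset.sum_congr rfl
  intro i _
  apply Finset.sum_congr rfl
  intro π _
  rw [show i + desP π + 1 = i + (desP π + 1) from by omega, pow_add]
  ring

lemma Lf_prod {n : ℕ} (hn : 1 ≤ n) (j m : ℕ) {ι κ : Type*} (s : Finset ι) (t : Finset κ)
    (u : ι → ℚ) (e : ι → ℕ) (v : κ → ℚ) (d : κ → ℕ) :
    Lf n j m ((∑ x ∈ s, MvPolynomial.C (u x) * (MvPolynomial.X (0 : Fin 2))^(e x))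
      * (∑ y ∈ t, MvPolynomial.C (v y) * (MvPolynomial.X (1 : Fin 2))^(d y)))
      = (∑ x ∈ s, u x * (((n + j - e x).choose n : ℕ) : ℚ))
        * (∑ y ∈ t, v y * (((n + m - d y).choose n : ℕ) : ℚ)) := by
  rw [Finset.sum_mul_sum, Finset.sum_mul_sum]
  rw [Lf_sum]
  apply Finset.sum_congr rfl
  intro x _
  rw [Lf_sum]
  apply Finset.sum_congr rfl
  intro y _
  have hmono : (MvPolynomial.C (u x) * MvPolynomial.X (0:Fin 2) ^ (e x))
      * (MvPolynomial.C (v y) * MvPolynomial.X (1:Fin 2) ^ (d y))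
      = MvPolynomial.monomial (pairF (e x) (d y)) (u x * v y) := by
    rw [MvPolynomial.C_apply, MvPolynomial.C_apply, MvPolynomial.X_pow_eq_monomial,
      MvPolynomial.X_pow_eq_monomial, MvPolynomial.monomial_mul, MvPolynomial.monomial_mul,
      MvPolynomial.monomial_mul]
    rw [pairF]
    congr 1
    · simp
    · ring
  rw [hmono, Lf_monomial hn]
  ring

lemma Lf_eulerTwo (N j m : ℕ) :
    Lf (N+1) j m (eulerTwo (N+1)) = (((j*m + N).choose (N+1) : ℕ) : ℚ) := by
  rw [eulerTwo, if_neg (Nat.succ_ne_zero N), Lf_sum]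
  have hterm : ∀ π : Equiv.Perm (Fin (N+1)),
      Lf (N+1) j m (MvPolynomial.X 0 ^ (desP π + 1) * MvPolynomial.X (1:Fin 2) ^ (desP π⁻¹ + 1))
        = ((((j + N - (desF ⇑π).card).choose (N+1)
            * ((m + N - (desF ⇑π⁻¹).card).choose (N+1)) : ℕ)) : ℚ) := by
    intro π
    have hx : (MvPolynomial.X 0 ^ (desP π + 1) * MvPolynomial.X (1:Fin 2) ^ (desP π⁻¹ + 1)
        : MvPolynomial (Fin 2) ℚ)
        = MvPolynomial.monomial (pairF (desP π + 1) (desP π⁻¹ + 1)) 1 := by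
      rw [MvPolynomial.X_pow_eq_monomial, MvPolynomial.X_pow_eq_monomial,
        MvPolynomial.monomial_mul, one_mul, pairF]
    rw [hx, Lf_monomial (by omega)]
    have h1 := desF_card_le (⇑π)
    have h2 := desF_card_le (⇑π⁻¹)
    rw [show (N+1) + j - (desP π + 1) = j + N - (desF ⇑π).card from by rw [desP_eq]; omega,
      show (N+1) + m - (desP π⁻¹ + 1) = m + N - (desF ⇑π⁻¹).card from by rw [desP_eq]; omega]
    push_cast
    ring
  rw [Finset.sum_congr rfl (fun π _ => hterm π), ← Nat.cast_sum, crs_count N j m]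

lemma Lf_RHS_term_pos (N j m K : ℕ) (hk : K + 1 ≤ N + 1) :
    Lf (N+1) j m ((((1 - MvPolynomial.X 0) * (1 - MvPolynomial.X 1)) ^ (N + 1 - (K+1))
        * eulerPoly 0 (K+1) * eulerPoly 1 (K+1)) : MvPolynomial (Fin 2) ℚ)
      = ((j:ℚ))^(K+1) * ((m:ℚ))^(K+1) := by
  set p := N + 1 - (K+1) with hp
  have hre : (((1 - MvPolynomial.X 0) * (1 - MvPolynomial.X 1)) ^ p
      * eulerPoly 0 (K+1) * eulerPoly 1 (K+1) : MvPolynomial (Fin 2) ℚ)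
      = ((1 - MvPolynomial.X 0)^p * eulerPoly 0 (K+1))
        * ((1 - MvPolynomial.X 1)^p * eulerPoly 1 (K+1)) := by
    rw [mul_pow]
    ring
  rw [hre, expand_factor, expand_factor, Lf_prod (by omega)]
  have hkp : (K+1) + p = N+1 := by omega
  have hV1 : (∑ q ∈ (range (p+1)) ×ˢ (univ : Finset (Equiv.Perm (Fin (K+1)))),
      (-1:ℚ)^q.1 * ((p.choose q.1 : ℕ) : ℚ)
        * ((((N+1) + j - (q.1 + desP q.2 + 1)).choose (N+1) : ℕ) : ℚ))
      = Vsum p (K+1) j := by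
    rw [Finset.sum_product]
    unfold Vsum
    apply Finset.sum_congr rfl
    intro i _
    apply Finset.sum_congr rfl
    intro π _
    rw [hkp]
  have hV2 : (∑ q ∈ (range (p+1)) ×ˢ (univ : Finset (Equiv.Perm (Fin (K+1)))),
      (-1:ℚ)^q.1 * ((p.choose q.1 : ℕ) : ℚ)
        * ((((N+1) + m - (q.1 + desP q.2 + 1)).choose (N+1) : ℕ) : ℚ))
      = Vsum p (K+1) m := by
    rw [Finset.sum_product]
    unfold Vsum
    apply Finset.sum_congr rfl
    intro i _
    apply Finset.sum_congr rfl
    intro π _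
    rw [hkp]
  rw [show (∑ x ∈ (range (p+1)) ×ˢ (univ : Finset (Equiv.Perm (Fin (K+1)))),
      ((-1:ℚ)^x.1 * ((p.choose x.1 : ℕ) : ℚ))
        * ((((N+1) + j - (x.1 + desP x.2 + 1)).choose (N+1) : ℕ) : ℚ))
      = Vsum p (K+1) j from by rw [← hV1]]
  rw [show (∑ y ∈ (range (p+1)) ×ˢ (univ : Finset (Equiv.Perm (Fin (K+1)))),
      ((-1:ℚ)^y.1 * ((p.choose y.1 : ℕ) : ℚ))
        * ((((N+1) + m - (y.1 + desP y.2 + 1)).choose (N+1) : ℕ) : ℚ))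
      = Vsum p (K+1) m from by rw [← hV2]]
  rw [Vsum_eq, Vsum_eq]

end Final

open PolyPart Aux Part2 VPart LogPart Final in
/-- `Σ_n A_n(s,t) u^n = Σ_k (1/k!) log(1/(1-(1-s)(1-t)u))^k
· A_k(s)A_k(t)/((1-s)^k(1-t)^k)`, as a power series in `u` with coefficients in
`ℚ[s,t]`: since `[u^n] log(1/(1-qu))^k = q^n · [u^n] log(1/(1-u))^k` (with
`q = (1-s)(1-t)`) and this vanishes for `k > n`, the coefficient of `u^n` on the
right-hand side is the polynomial below. -/
theorem twoSided_eulerian_gf :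
    (PowerSeries.mk (fun n => eulerTwo n) :
        PowerSeries (MvPolynomial (Fin 2) ℚ))
      = PowerSeries.mk (fun n =>
          ∑ k ∈ Finset.range (n + 1),
            MvPolynomial.C ((PowerSeries.coeff (R := ℚ) n) (logInvSer ^ k) / (Nat.factorial k : ℚ)) *
              (((1 - MvPolynomial.X 0) * (1 - MvPolynomial.X 1)) ^ (n - k) *
                eulerPoly 0 k * eulerPoly 1 k)) := by
  apply PowerSeries.ext
  intro n
  rw [PowerSeries.coeff_mk, PowerSeries.coeff_mk]
  rcases n with _ | N
  · rw [eulerTwo, if_pos rfl, show (0:ℕ)+1 = 1 from rfl, Finset.sum_range_one]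
    simp [eulerPoly]
  · apply Lf_inj (n := N+1) (by omega)
    intro j m
    rw [Lf_eulerTwo, Lf_sum]
    have hterm : ∀ k ∈ range (N+1+1),
        Lf (N+1) j m (MvPolynomial.C ((PowerSeries.coeff (R := ℚ) (N+1)) (logInvSer ^ k) / (k.factorial : ℚ)) *
          (((1 - MvPolynomial.X 0) * (1 - MvPolynomial.X 1)) ^ (N+1 - k)
            * eulerPoly 0 k * eulerPoly 1 k))
        = (PowerSeries.coeff (R := ℚ) (N+1)) (logInvSer ^ k) * ((j:ℚ) * (m:ℚ))^k / (k.factorial : ℚ) := by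
      intro k hk
      rw [Lf_C_mul]
      rcases k with _ | K
      · rw [pow_zero, PowerSeries.coeff_one, if_neg (Nat.succ_ne_zero N)]
        simp
      · rw [Lf_RHS_term_pos N j m K (by have := Finset.mem_range.mp hk; omega), mul_pow]
        ring
    rw [Finset.sum_congr rfl hterm]
    have hs := sum_c (N+1) (((j * m : ℕ)) : ℚ)
    push_cast at hs
    rw [hs]
    rcases Nat.eq_zero_or_pos (j * m) with hjm | hjm
    · have hj0 : (j:ℚ) * (m:ℚ) = 0 := by
        have : ((j*m : ℕ) : ℚ) = 0 := by rw [hjm]; simp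
        push_cast at this
        linarith
      rw [show ((j*m + N).choose (N+1)) = 0 from Nat.choose_eq_zero_of_lt (by omega)]
      rw [Finset.prod_eq_zero (Finset.mem_range.mpr (show 0 < N+1 by omega))
        (by rw [hj0]; simp)]
      simp
    · have hp := prod_asc_nat (j*m) (N+1) hjm
      rw [show j*m + (N+1) - 1 = j*m + N from by omega] at hp
      have hcast : (∏ i ∈ range (N+1), ((j:ℚ) * (m:ℚ) + (i:ℚ)))
          = (((N+1).factorial * (j*m + N).choose (N+1) : ℕ) : ℚ) := by
        rw [← hp, Nat.cast_prod]
        apply Finset.prod_congr rfl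
        intro i _
        push_cast
        ring
      rw [hcast]
      have hfac : (((N+1).factorial : ℕ) : ℚ) ≠ 0 := by
        exact_mod_cast Nat.factorial_ne_zero (N+1)
      push_cast
      push_cast at hfac
      field_simp
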